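/- Let P be a polynomial of exact degree n ≥ 1 such that A := P⁻¹([−1,1]) ⊆ ℝ. Then all coefficients of P are real, P has n simple real zeros, and |P(y)| ≥ 1 for every real critical point y of P. -/

import Mathlib

open Polynomial

private lemma conj_eval_real_aux (P : ℂ[X]) (hconj : P.map (starRingEnd ℂ) = P) (y : ℝ) :
    (starRingEnd ℂ) (P.eval (y : ℂ)) = P.eval (y : ℂ) := by
  have h1 : P.eval₂ (starRingEnd ℂ) ((starRingEnd ℂ) (y : ℂ)) =
      (starRingEnd ℂ) (P.eval (y : ℂ)) := eval₂_at_apply _ _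
  rw [Complex.conj_ofReal] at h1
  conv_rhs => rw [← hconj]
  rw [eval_map, h1]

set_option maxHeartbeats 1000000 in
private lemma key_lemma (n : ℕ) (hn : 1 ≤ n) (P : ℂ[X]) (hdeg : P.natDegree = n)
    (hA : ∀ z : ℂ, (P.eval z ∈ (fun t : ℝ => (t : ℂ)) '' Set.Icc (-1 : ℝ) 1) → z.im = 0)
    (hconj : P.map (starRingEnd ℂ) = P) (y : ℝ)
    (hv : ‖P.eval (y : ℂ)‖ < 1)
    (hm : 2 ≤ rootMultiplicity (y : ℂ) (P - C (P.eval (y : ℂ)))) : False := by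
  set v : ℂ := P.eval (y : ℂ) with hv_def
  have hvconj : (starRingEnd ℂ) v = v := conj_eval_real_aux P hconj y
  have hvim : v.im = 0 := Complex.conj_eq_iff_im.mp hvconj
  set F : ℂ[X] := P - C v with hF_def
  have hFconj : F.map (starRingEnd ℂ) = F := by
    rw [hF_def, Polynomial.map_sub, hconj, map_C, hvconj]
  have hF0 : F ≠ 0 := by
    intro h
    have h2 : F.natDegree = n := by rw [hF_def, natDegree_sub_C, hdeg]
    rw [h, natDegree_zero] at h2; omega
  set m : ℕ := rootMultiplicity (y : ℂ) F with hm_def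
  obtain ⟨H, hfact, hndvd⟩ := F.exists_eq_pow_rootMultiplicity_mul_and_not_dvd hF0 (y : ℂ)
  set c : ℂ := H.eval (y : ℂ) with hc_def
  have hc0 : c ≠ 0 := fun h => hndvd (dvd_iff_isRoot.mpr h)
  have hHconj : H.map (starRingEnd ℂ) = H := by
    have hXy : ((X - C (y : ℂ)) ^ m).map (starRingEnd ℂ) = (X - C (y : ℂ)) ^ m := by
      simp [Polynomial.map_pow, Polynomial.map_sub, Complex.conj_ofReal]
    have h1 := congrArg (Polynomial.map (starRingEnd ℂ)) hfact
    rw [Polynomial.map_mul, hXy, hFconj] at h1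
    have h2 : (X - C (y : ℂ)) ^ m * H = (X - C (y : ℂ)) ^ m * H.map (starRingEnd ℂ) :=
      hfact.symm.trans h1
    exact (mul_left_cancel₀ (pow_ne_zero _ (X_sub_C_ne_zero _)) h2).symm
  have hcim : c.im = 0 := Complex.conj_eq_iff_im.mp (conj_eval_real_aux H hHconj y)
  have hcre : c.re ≠ 0 := by
    intro h
    exact hc0 (Complex.ext (by simpa using h) (by simpa using hcim))
  -- continuity choices
  obtain ⟨δ₁, hδ₁pos, hδ₁⟩ := Metric.continuousAt_iff.mp (H.continuousAt (a := (y : ℂ)))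
    (|c.re| / 2) (by positivity)
  obtain ⟨δ₂, hδ₂pos, hδ₂⟩ := Metric.continuousAt_iff.mp (P.continuousAt (a := (y : ℂ)))
    (1 - ‖v‖) (by linarith)
  set ε : ℝ := min δ₁ δ₂ / 2 with hε_def
  have hmin : 0 < min δ₁ δ₂ := lt_min hδ₁pos hδ₂pos
  have hεpos : 0 < ε := by positivity
  have hεlt : ε < min δ₁ δ₂ := by rw [hε_def]; linarith
  have hεδ₁ : ε < δ₁ := lt_of_lt_of_le hεlt (min_le_left _ _)
  have hεδ₂ : ε < δ₂ := lt_of_lt_of_le hεlt (min_le_right _ _)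
  set zf : ℝ → ℂ := fun θ => (y : ℂ) + (ε : ℂ) * Complex.exp ((θ : ℂ) * Complex.I) with hzf
  have hdist : ∀ θ : ℝ, dist (zf θ) (y : ℂ) = ε := by
    intro θ
    rw [Complex.dist_eq]
    simp [hzf, add_sub_cancel_left, map_mul, Complex.norm_real,
      Complex.norm_exp_ofReal_mul_I, abs_of_pos hεpos]
  have heval : ∀ θ : ℝ, P.eval (zf θ) =
      v + (ε : ℂ) ^ m * Complex.exp ((m : ℂ) * ((θ : ℂ) * Complex.I)) * H.eval (zf θ) := by
    intro θ
    have h1 : P = F + C v := by rw [hF_def]; ring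
    have h2 : zf θ - (y : ℂ) = (ε : ℂ) * Complex.exp ((θ : ℂ) * Complex.I) := by
      simp [hzf]
    conv_lhs => rw [h1]
    rw [eval_add, eval_C, hfact, eval_mul, eval_pow, eval_sub, eval_X, eval_C, h2,
      mul_pow, ← Complex.exp_nat_mul]
    ring
  set g : ℝ → ℝ := fun θ => (P.eval (zf θ)).im with hg
  have hzfcont : Continuous zf := by
    apply continuous_const.add
    exact continuous_const.mul
      (Complex.continuous_exp.comp (Complex.continuous_ofReal.mul continuous_const))
  have hgcont : Continuous g := Complex.continuous_im.comp (P.continuous.comp hzfcont)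
  have hm2 : (2 : ℝ) ≤ (m : ℝ) := by exact_mod_cast hm
  have hmpos : (0 : ℝ) < (m : ℝ) := by linarith
  have hpi := Real.pi_pos
  set θ₁ : ℝ := Real.pi / (2 * m) with hθ₁_def
  set θ₂ : ℝ := 3 * Real.pi / (2 * m) with hθ₂_def
  have hθ₁m : (m : ℝ) * θ₁ = Real.pi / 2 := by
    rw [hθ₁_def]; field_simp
  have hθ₂m : (m : ℝ) * θ₂ = Real.pi + Real.pi / 2 := by
    rw [hθ₂_def]; field_simp; ring
  have hexp_half : Complex.exp (((Real.pi / 2 : ℝ) : ℂ) * Complex.I) = Complex.I := by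
    rw [Complex.exp_mul_I]
    simp [← Complex.ofReal_cos, ← Complex.ofReal_sin, Real.cos_pi_div_two, Real.sin_pi_div_two]
  have E₁ : Complex.exp ((m : ℂ) * ((θ₁ : ℂ) * Complex.I)) = Complex.I := by
    have h : (m : ℂ) * ((θ₁ : ℂ) * Complex.I) = ((Real.pi / 2 : ℝ) : ℂ) * Complex.I := by
      rw [← mul_assoc]
      congr 1
      rw [show (m : ℂ) * (θ₁ : ℂ) = (((m : ℝ) * θ₁ : ℝ) : ℂ) by push_cast; ring, hθ₁m]
    rw [h, hexp_half]
  have E₂ : Complex.exp ((m : ℂ) * ((θ₂ : ℂ) * Complex.I)) = -Complex.I := by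
    have h : (m : ℂ) * ((θ₂ : ℂ) * Complex.I) =
        ((Real.pi : ℝ) : ℂ) * Complex.I + ((Real.pi / 2 : ℝ) : ℂ) * Complex.I := by
      rw [← add_mul, ← mul_assoc]
      congr 1
      rw [show (m : ℂ) * (θ₂ : ℂ) = (((m : ℝ) * θ₂ : ℝ) : ℂ) by push_cast; ring, hθ₂m]
      push_cast; ring
    rw [h, Complex.exp_add, Complex.exp_pi_mul_I, hexp_half]
    ring
  have hg₁ : g θ₁ = ε ^ m * (H.eval (zf θ₁)).re := by
    show (P.eval (zf θ₁)).im = _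
    rw [heval θ₁, E₁]
    simp only [Complex.add_im, Complex.mul_im, Complex.mul_re, ← Complex.ofReal_pow,
      Complex.ofReal_re, Complex.ofReal_im, Complex.I_re, Complex.I_im, hvim]
    ring
  have hg₂ : g θ₂ = -(ε ^ m * (H.eval (zf θ₂)).re) := by
    show (P.eval (zf θ₂)).im = _
    rw [heval θ₂, E₂]
    simp only [Complex.add_im, Complex.mul_im, Complex.mul_re, ← Complex.ofReal_pow,
      Complex.ofReal_re, Complex.ofReal_im, Complex.I_re, Complex.I_im, Complex.neg_re,
      Complex.neg_im, hvim]
    ring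
  have hHre : ∀ θ : ℝ, |(H.eval (zf θ)).re - c.re| < |c.re| / 2 := by
    intro θ
    have hd : dist (zf θ) (y : ℂ) < δ₁ := by rw [hdist θ]; exact hεδ₁
    have h3 := hδ₁ hd
    rw [Complex.dist_eq] at h3
    calc |(H.eval (zf θ)).re - c.re| = |(H.eval (zf θ) - c).re| := by rw [Complex.sub_re]
      _ ≤ ‖H.eval (zf θ) - c‖ := Complex.abs_re_le_norm _
      _ < |c.re| / 2 := h3
  have hsign : 0 < (H.eval (zf θ₁)).re * (H.eval (zf θ₂)).re := by
    have h1 := abs_sub_lt_iff.mp (hHre θ₁)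
    have h2 := abs_sub_lt_iff.mp (hHre θ₂)
    rcases lt_or_gt_of_ne hcre with h | h
    · rw [abs_of_neg h] at h1 h2; nlinarith [h1.1, h1.2, h2.1, h2.2]
    · rw [abs_of_pos h] at h1 h2; nlinarith [h1.1, h1.2, h2.1, h2.2]
  have hθle : θ₁ ≤ θ₂ := by
    rw [hθ₁_def, hθ₂_def, div_le_div_iff₀ (by positivity) (by positivity)]
    nlinarith
  have hglt : g θ₁ * g θ₂ < 0 := by
    rw [hg₁, hg₂]
    nlinarith [mul_pos (mul_pos (pow_pos hεpos m) (pow_pos hεpos m)) hsign]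
  have hexists : ∃ θ ∈ Set.Icc θ₁ θ₂, g θ = 0 := by
    rcases mul_neg_iff.mp hglt with ⟨hp, hq⟩ | ⟨hp, hq⟩
    · obtain ⟨θ, hθ, h0⟩ := intermediate_value_Icc' hθle hgcont.continuousOn ⟨hq.le, hp.le⟩
      exact ⟨θ, hθ, h0⟩
    · obtain ⟨θ, hθ, h0⟩ := intermediate_value_Icc hθle hgcont.continuousOn ⟨hp.le, hq.le⟩
      exact ⟨θ, hθ, h0⟩
  obtain ⟨θs, hθs, h0⟩ := hexists
  have habsP : ‖P.eval (zf θs)‖ < 1 := by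
    have hd : dist (zf θs) (y : ℂ) < δ₂ := by rw [hdist θs]; exact hεδ₂
    have h3 := hδ₂ hd
    rw [Complex.dist_eq] at h3
    calc ‖P.eval (zf θs)‖
        ≤ ‖P.eval (zf θs) - v‖ + ‖v‖ := by
          simpa using norm_add_le (P.eval (zf θs) - v) v
      _ < 1 := by linarith
  have himP : (P.eval (zf θs)).im = 0 := h0
  have hrebound := abs_le.mp ((Complex.abs_re_le_norm (P.eval (zf θs))).trans_lt habsP).le
  have him : (zf θs).im = 0 := by
    apply hA
    refine ⟨(P.eval (zf θs)).re, ⟨hrebound.1, hrebound.2⟩, ?_⟩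
    exact Complex.ext (by simp) (by simpa using himP.symm)
  have hθ₂pi : θ₂ < Real.pi := by
    rw [hθ₂_def, div_lt_iff₀ (by positivity)]
    nlinarith
  have hsin : 0 < Real.sin θs := by
    apply Real.sin_pos_of_pos_of_lt_pi
    · exact lt_of_lt_of_le (by positivity) hθs.1
    · exact lt_of_le_of_lt hθs.2 hθ₂pi
  have himval : (zf θs).im = ε * Real.sin θs := by
    simp [hzf, Complex.add_im, Complex.mul_im, Complex.ofReal_re, Complex.ofReal_im,
      Complex.exp_ofReal_mul_I_im]
  rw [himval] at him
  nlinarith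

theorem inverse_image_real_converse (n : ℕ) (hn : 1 ≤ n) (P : ℂ[X]) (hdeg : P.natDegree = n)
    (hA : ∀ z : ℂ, (P.eval z ∈ (fun t : ℝ => (t : ℂ)) '' Set.Icc (-1 : ℝ) 1) → z.im = 0) :
    (∀ k, (P.coeff k).im = 0) ∧
    P.roots.card = n ∧ P.roots.Nodup ∧ (∀ z ∈ P.roots, z.im = 0) ∧
    (∀ y : ℝ, P.derivative.eval (y : ℂ) = 0 → 1 ≤ ‖P.eval (y : ℂ)‖) := by
  have hP0 : P ≠ 0 := by
    intro h
    rw [h, natDegree_zero] at hdeg; omega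
  have hsplits : P.Splits := IsAlgClosed.splits P
  have hcard' : P.roots.card = P.natDegree := (splits_iff_card_roots).mp hsplits
  have hcard : P.roots.card = n := hcard'.trans hdeg
  have hreal : ∀ z ∈ P.roots, z.im = 0 := by
    intro z hz
    apply hA
    exact ⟨0, by norm_num, by simpa using (isRoot_of_mem_roots hz).symm⟩
  -- there is a real point where P takes value 1
  have hdegpos : 0 < (P - C 1).degree := by
    rw [← natDegree_pos_iff_degree_pos, natDegree_sub_C, hdeg]; omega
  obtain ⟨z₀, hz₀⟩ := Complex.exists_root hdegpos
  have hz₀1 : P.eval z₀ = 1 := by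
    have := hz₀
    simp only [IsRoot, eval_sub, eval_C] at this
    linear_combination this
  have hz₀im : z₀.im = 0 := hA z₀ ⟨1, by norm_num, by simp [hz₀1]⟩
  have hfact := C_leadingCoeff_mul_prod_multiset_X_sub_C (p := P) (hcard.trans hdeg.symm)
  -- the product of (z₀ - a) over roots is fixed by conjugation
  set r : ℂ := (P.roots.map fun a => z₀ - a).prod with hr_def
  have hrconj : (starRingEnd ℂ) r = r := by
    rw [hr_def, map_multiset_prod, Multiset.map_map]
    refine congrArg Multiset.prod (Multiset.map_congr rfl ?_)
    intro a ha
    simp only [Function.comp_apply, map_sub]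
    rw [Complex.conj_eq_iff_im.mpr hz₀im, Complex.conj_eq_iff_im.mpr (hreal a ha)]
  have heval₀ : P.leadingCoeff * r = 1 := by
    have := congrArg (Polynomial.eval z₀) hfact
    rw [eval_mul, eval_C, eval_multiset_prod, Multiset.map_map, hz₀1] at this
    rw [hr_def]
    convert this using 3
    · rfl
    simp [Function.comp]
  have hr0 : r ≠ 0 := by
    intro h; rw [h, mul_zero] at heval₀; exact one_ne_zero heval₀.symm
  have hlcconj : (starRingEnd ℂ) P.leadingCoeff = P.leadingCoeff := by
    have h1 := congrArg (starRingEnd ℂ) heval₀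
    rw [map_mul, hrconj, map_one] at h1
    have h2 : (starRingEnd ℂ) P.leadingCoeff * r = P.leadingCoeff * r := h1.trans heval₀.symm
    exact mul_right_cancel₀ hr0 h2
  have hconj : P.map (starRingEnd ℂ) = P := by
    conv_lhs => rw [← hfact]
    conv_rhs => rw [← hfact]
    rw [Polynomial.map_mul, map_C, hlcconj, Polynomial.map_multiset_prod, Multiset.map_map]
    refine congrArg _ (congrArg Multiset.prod (Multiset.map_congr rfl ?_))
    intro a ha
    simp only [Function.comp_apply, Polynomial.map_sub, Polynomial.map_X, map_C]
    rw [Complex.conj_eq_iff_im.mpr (hreal a ha)]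
  have hcoeff : ∀ k, (P.coeff k).im = 0 := by
    intro k
    have := congrArg (fun q : ℂ[X] => q.coeff k) hconj
    simp only [coeff_map] at this
    exact Complex.conj_eq_iff_im.mp this
  refine ⟨hcoeff, hcard, ?_, hreal, ?_⟩
  · -- Nodup
    by_contra hnd
    rw [Multiset.nodup_iff_count_le_one] at hnd
    push_neg at hnd
    obtain ⟨a, ha⟩ := hnd
    have hmem : a ∈ P.roots := Multiset.count_pos.mp (by omega)
    have haim : a.im = 0 := hreal a hmem
    have ha' : ((a.re : ℝ) : ℂ) = a := Complex.ext (by simp) (by simp [haim])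
    have haroot : P.eval a = 0 := isRoot_of_mem_roots hmem
    have hcount : 2 ≤ rootMultiplicity a P := by
      rw [← count_roots]; omega
    apply key_lemma n hn P hdeg hA hconj a.re
    · rw [ha', haroot]; simp
    · rw [ha', haroot]; simpa using hcount
  · -- critical points
    intro y hy
    by_contra hlt
    push_neg at hlt
    set v : ℂ := P.eval (y : ℂ) with hv_def
    set F : ℂ[X] := P - C v with hF_def
    have hF0 : F ≠ 0 := by
      intro h
      have h2 : F.natDegree = n := by rw [hF_def, natDegree_sub_C, hdeg]
      rw [h, natDegree_zero] at h2; omega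
    have hFroot : F.IsRoot (y : ℂ) := by
      simp [hF_def, IsRoot, hv_def]
    have hFd : F.derivative = P.derivative := by
      rw [hF_def]; simp
    have hPd0 : P.derivative ≠ 0 := by
      intro h
      have := natDegree_eq_zero_of_derivative_eq_zero h
      omega
    have hd1 : 0 < rootMultiplicity (y : ℂ) F.derivative := by
      rw [hFd]
      exact (rootMultiplicity_pos hPd0).mpr hy
    have hd2 : rootMultiplicity (y : ℂ) F.derivative = rootMultiplicity (y : ℂ) F - 1 :=
      derivative_rootMultiplicity_of_root hFroot
    have hm1 : 0 < rootMultiplicity (y : ℂ) F := (rootMultiplicity_pos hF0).mpr hFroot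
    have hm : 2 ≤ rootMultiplicity (y : ℂ) (P - C (P.eval (y : ℂ))) := by
      rw [← hv_def, ← hF_def]; omega
    exact key_lemma n hn P hdeg hA hconj y hlt hm
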